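/- For every ε > 0 there exists N such that for all n ≥ N and every integer r with 1 ≤ r ≤ n/2, there exists a nonzero function f : {0,1}^n → ℝ supported on the Hamming ball B_r of radius r around 0^n such that ⟨Af, f⟩ ≥ (2·√(r·(n − r)) − εn)·⟨f, f⟩, where A is the adjacency operator of the Hamming graph (i.e., the maximal Rayleigh quotient λ_{B_r} of A over functions supported on B_r satisfies λ_{B_r} ≥ 2√(r(n−r)) − εn). -/

import Mathlib

/-- The adjacency operator of the Hamming graph on `{0,1}^n`. -/
def adjOp {n : ℕ} (f : (Fin n → Bool) → ℝ) (x : Fin n → Bool) : ℝ :=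
  ∑ y ∈ Finset.univ.filter fun y => hammingDist x y = 1, f y

/-- Inner product `⟨f, g⟩ = E_x[f(x)·g(x)]`, `x` uniform in `{0,1}^n`. -/
noncomputable def cubeInner {n : ℕ} (f g : (Fin n → Bool) → ℝ) : ℝ :=
  (∑ x, f x * g x) / 2 ^ n

/-- Hamming weight of `x ∈ {0,1}^n`. -/
def hWt {n : ℕ} (x : Fin n → Bool) : ℕ := (Finset.univ.filter fun i => x i = true).card

/-! ### Auxiliary lemmas -/

lemma hWt_le {n : ℕ} (x : Fin n → Bool) : hWt x ≤ n :=
  (Finset.card_filter_le _ _).trans (by simp)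

lemma card_weight_eq {n k : ℕ} :
    (Finset.univ.filter fun x : Fin n → Bool => hWt x = k).card = n.choose k := by
  have : (Finset.univ.filter fun x : Fin n → Bool => hWt x = k).card
      = (Finset.powersetCard k (Finset.univ : Finset (Fin n))).card := by
    apply Finset.card_nbij' (fun x => Finset.univ.filter fun i => x i = true)
      (fun S => fun i => decide (i ∈ S))
    · intro x hx
      simp only [Finset.mem_coe, Finset.mem_powersetCard] at hx ⊢
      exact ⟨Finset.filter_subset _ _, (Finset.mem_filter.1 hx).2⟩
    · intro S hS
      change (fun i => decide (i ∈ S)) ∈ Finset.univ.filter fun x : Fin n → Bool => hWt x = k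
      rw [Finset.mem_filter]
      simp only [Finset.mem_coe, Finset.mem_filter, Finset.mem_univ, true_and, hWt] at hS ⊢
      rw [← (Finset.mem_powersetCard.1 hS).2]
      congr 1
      ext i
      simp
    · intro x hx
      funext i
      simp
    · intro S hS
      ext i
      simp
  rw [this, Finset.card_powersetCard, Finset.card_univ, Fintype.card_fin]

lemma sum_by_weight {n : ℕ} (F : ℕ → ℝ) :
    (∑ x : Fin n → Bool, F (hWt x)) = ∑ k ∈ Finset.range (n+1), (n.choose k : ℝ) * F k := by
  have h1 := Finset.sum_fiberwise_of_maps_to (s := (Finset.univ : Finset (Fin n → Bool)))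
      (t := Finset.range (n+1)) (g := hWt)
      (fun x _ => Finset.mem_range.2 (Nat.lt_succ_of_le (hWt_le x))) (fun x => F (hWt x))
  rw [← h1]
  refine Finset.sum_congr rfl fun k hk => ?_
  rw [Finset.sum_congr rfl (fun x hx => by rw [(Finset.mem_filter.1 hx).2]),
    Finset.sum_const, card_weight_eq, nsmul_eq_mul]

lemma neighbors_eq {n : ℕ} (x : Fin n → Bool) :
    (Finset.univ.filter fun y => hammingDist x y = 1)
      = Finset.image (fun i => Function.update x i (!x i)) Finset.univ := by
  ext y
  simp only [Finset.mem_filter, Finset.mem_univ, true_and, Finset.mem_image]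
  constructor
  · intro h
    rw [hammingDist, Finset.card_eq_one] at h
    obtain ⟨a, ha⟩ := h
    refine ⟨a, ?_⟩
    have hmem : ∀ j : Fin n, x j ≠ y j ↔ j = a := by
      intro j
      rw [← Finset.mem_singleton, ← ha]
      simp
    funext j
    rcases eq_or_ne j a with rfl | hj
    · have : x j ≠ y j := (hmem j).2 rfl
      rw [Function.update_self]
      cases hx : x j <;> cases hy : y j <;> simp_all
    · rw [Function.update_of_ne hj]
      have := (hmem j).not.2 (by exact hj)
      exact not_ne_iff.1 this
  · rintro ⟨i, rfl⟩
    rw [hammingDist]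
    rw [Finset.card_eq_one]
    refine ⟨i, ?_⟩
    ext j
    simp only [Finset.mem_filter, Finset.mem_univ, true_and, Finset.mem_singleton]
    rcases eq_or_ne j i with rfl | hj
    · simp
    · simp [Function.update_of_ne hj, hj]

lemma update_inj {n : ℕ} (x : Fin n → Bool) :
    Function.Injective (fun i => Function.update x i (!x i)) := by
  intro i j h
  by_contra hij
  have h1 := congrFun h i
  simp [Function.update_self, Function.update_of_ne hij] at h1

lemma hWt_update {n : ℕ} (x : Fin n → Bool) (i : Fin n) :
    hWt (Function.update x i (!x i)) = if x i then hWt x - 1 else hWt x + 1 := by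
  unfold hWt
  by_cases hx : x i = true
  case pos =>
    rw [if_pos hx]
    have : (Finset.univ.filter fun j => Function.update x i (!x i) j = true)
        = (Finset.univ.filter fun j => x j = true).erase i := by
      ext j
      simp only [Finset.mem_filter, Finset.mem_univ, true_and, Finset.mem_erase]
      rcases eq_or_ne j i with rfl | hj
      · simp [hx]
      · simp [Function.update_of_ne hj, hj]
    rw [this, Finset.card_erase_of_mem (by simp [hx])]
  case neg =>
    rw [if_neg hx]
    have : (Finset.univ.filter fun j => Function.update x i (!x i) j = true)
        = insert i (Finset.univ.filter fun j => x j = true) := by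
      ext j
      simp only [Finset.mem_filter, Finset.mem_univ, true_and, Finset.mem_insert]
      rcases eq_or_ne j i with rfl | hj
      · simp [hx]
      · simp [Function.update_of_ne hj, hj]
    rw [this, Finset.card_insert_of_notMem (by simp [hx])]

lemma adj_radial {n : ℕ} (G : ℕ → ℝ) (x : Fin n → Bool) :
    adjOp (fun y => G (hWt y)) x
      = (hWt x : ℝ) * G (hWt x - 1) + ((n : ℝ) - hWt x) * G (hWt x + 1) := by
  rw [adjOp, neighbors_eq, Finset.sum_image (fun i _ j _ h => update_inj x h)]
  rw [← Finset.sum_filter_add_sum_filter_not Finset.univ (fun i => x i = true)]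
  have h1 : ∀ i ∈ Finset.univ.filter fun i => x i = true,
      G (hWt (Function.update x i (!x i))) = G (hWt x - 1) := by
    intro i hi
    rw [hWt_update, if_pos (by simpa using (Finset.mem_filter.1 hi).2)]
  have h2 : ∀ i ∈ Finset.univ.filter fun i => ¬ x i = true,
      G (hWt (Function.update x i (!x i))) = G (hWt x + 1) := by
    intro i hi
    rw [hWt_update, if_neg (by simpa using (Finset.mem_filter.1 hi).2)]
  rw [Finset.sum_congr rfl h1, Finset.sum_congr rfl h2, Finset.sum_const, Finset.sum_const]
  have hc1 : (Finset.univ.filter fun i => x i = true).card = hWt x := rfl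
  have hc2 : (Finset.univ.filter fun i => ¬ x i = true).card = n - hWt x := by
    rw [Finset.filter_not, Finset.card_sdiff_of_subset (Finset.filter_subset _ _)]
    simp [hWt]
  rw [hc1, hc2, nsmul_eq_mul, nsmul_eq_mul]
  congr 1
  congr 1
  rw [Nat.cast_sub (by exact (Finset.card_filter_le _ _).trans (by simp))]

/-! ### The test function -/

noncomputable def aS (m j : ℕ) : ℝ := Real.sin (j * (Real.pi / (m + 1)))

noncomputable def gF (n r m k : ℕ) : ℝ :=
  if k ≤ r then aS m (k + m - r) / Real.sqrt (n.choose k) else 0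

lemma aS_zero (m : ℕ) : aS m 0 = 0 := by simp [aS]

lemma aS_top (m : ℕ) : aS m (m + 1) = 0 := by
  have h : ((m + 1 : ℕ) : ℝ) * (Real.pi / (m + 1)) = Real.pi := by
    push_cast
    field_simp
  rw [aS, h, Real.sin_pi]

lemma aS_nonneg (m : ℕ) {j : ℕ} (hj : j ≤ m + 1) : 0 ≤ aS m j := by
  apply Real.sin_nonneg_of_nonneg_of_le_pi
  · positivity
  · calc (j : ℝ) * (Real.pi / (m+1)) ≤ (m+1 : ℝ) * (Real.pi / (m+1)) := by
          apply mul_le_mul_of_nonneg_right _ (by positivity)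
          exact_mod_cast hj
      _ = Real.pi := by field_simp

lemma aS_pos (m : ℕ) {j : ℕ} (hj1 : 1 ≤ j) (hj2 : j ≤ m) : 0 < aS m j := by
  apply Real.sin_pos_of_pos_of_lt_pi
  · have : (0:ℝ) < Real.pi / (m+1) := by positivity
    have : (1:ℝ) ≤ (j:ℝ) := by exact_mod_cast hj1
    nlinarith [Real.pi_pos]
  · have hj : (j:ℝ) < (m+1:ℝ) := by exact_mod_cast Nat.lt_succ_of_le hj2
    have h := mul_lt_mul_of_pos_right hj (show (0:ℝ) < Real.pi/(m+1) by positivity)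
    calc (j:ℝ) * (Real.pi/(m+1)) < (m+1:ℝ) * (Real.pi/(m+1)) := h
      _ = Real.pi := by field_simp

lemma aS_rec (m : ℕ) {j : ℕ} (hj : 1 ≤ j) :
    aS m (j - 1) + aS m (j + 1) = 2 * Real.cos (Real.pi / (m+1)) * aS m j := by
  have h1 : ((j-1:ℕ):ℝ) = (j:ℝ) - 1 := by
    rw [Nat.cast_sub hj]; norm_num
  set t := Real.pi / (m+1)
  rw [aS, aS, aS,
    show ((j-1:ℕ):ℝ)*t = (j:ℝ)*t - t by rw [h1]; ring,
    show ((j+1:ℕ):ℝ)*t = (j:ℝ)*t + t by push_cast; ring,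
    Real.sin_sub, Real.sin_add]
  ring

lemma choose_id (n k : ℕ) (hk1 : 1 ≤ k) (hkn : k ≤ n) :
    k * n.choose k = (n + 1 - k) * n.choose (k - 1) := by
  have h := Nat.choose_succ_right_eq n (k - 1)
  rw [Nat.sub_add_cancel hk1] at h
  calc k * n.choose k = n.choose k * k := Nat.mul_comm _ _
    _ = n.choose (k-1) * (n - (k-1)) := h
    _ = (n + 1 - k) * n.choose (k-1) := by
        rw [Nat.mul_comm]
        congr 1
        omega

lemma sqrt_choose_left (n k : ℕ) (hk1 : 1 ≤ k) (hkn : k ≤ n) :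
    (k:ℝ) * (n.choose k) =
      Real.sqrt ((k*(n+1-k):ℕ)) * (Real.sqrt (n.choose k) * Real.sqrt (n.choose (k-1))) := by
  rw [← Real.sqrt_mul (by positivity) ((n.choose (k-1) : ℝ)),
    ← Real.sqrt_mul (by positivity)]
  have hN : (k*(n+1-k):ℕ) * (n.choose k * n.choose (k-1)) = (k * n.choose k)^2 := by
    have : (k*(n+1-k):ℕ) * (n.choose k * n.choose (k-1))
        = (k * n.choose k) * ((n+1-k) * n.choose (k-1)) := by ring
    rw [this, ← choose_id n k hk1 hkn]
    ring
  have harg : ((k*(n+1-k):ℕ):ℝ) * ((n.choose k : ℝ) * (n.choose (k-1) : ℝ))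
      = ((k:ℝ)*(n.choose k))^2 := by exact_mod_cast congrArg (Nat.cast (R := ℝ)) hN
  rw [harg, Real.sqrt_sq (by positivity)]

lemma sqrt_choose_right (n k : ℕ) (hk : k < n) :
    ((n-k : ℕ):ℝ) * (n.choose k) =
      Real.sqrt (((k+1)*(n-k):ℕ)) * (Real.sqrt (n.choose k) * Real.sqrt (n.choose (k+1))) := by
  have h := sqrt_choose_left n (k+1) (Nat.le_add_left 1 k) hk
  rw [Nat.add_sub_cancel] at h
  have hc : ((k+1 : ℕ):ℝ) * (n.choose (k+1)) = ((n-k:ℕ):ℝ) * (n.choose k) := by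
    have := choose_id n (k+1) (Nat.le_add_left 1 k) hk
    rw [Nat.add_sub_cancel] at this
    have h2 : n + 1 - (k+1) = n - k := by omega
    rw [h2] at this
    exact_mod_cast congrArg (Nat.cast (R := ℝ)) this
  rw [← hc]
  rw [h]
  have : n + 1 - (k+1) = n - k := by omega
  rw [this]
  ring

lemma term_ge (n r m k : ℕ) (hm : 2 ≤ m) (hmr : m ≤ r + 1) (h2r : 2*r ≤ n) (hk : k ≤ n) :
    ((k : ℝ) * gF n r m (k-1) + ((n:ℝ) - k) * gF n r m (k+1)) * gF n r m k * (n.choose k : ℝ)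
      ≥ 2 * Real.sqrt (((r+2-m)*(n-r) : ℕ)) * Real.cos (Real.pi/(m+1))
          * ((n.choose k : ℝ) * gF n r m k ^ 2) := by
  set B := Real.sqrt (((r+2-m)*(n-r) : ℕ)) with hB
  set c := Real.cos (Real.pi/(m+1)) with hc
  by_cases hkr : k ≤ r
  case neg =>
    have : gF n r m k = 0 := if_neg hkr
    rw [this]; ring_nf; exact le_refl 0
  by_cases hj1 : r + 1 ≤ k + m
  case neg =>
    have : gF n r m k = 0 := by
      rw [gF, if_pos hkr, show k + m - r = 0 by omega, aS_zero]
      simp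
    rw [this]; ring_nf; exact le_refl 0
  -- main case
  set j := k + m - r with hjdef
  have hj : k + m = r + j := by omega
  have hjge : 1 ≤ j := by omega
  have hjle : j ≤ m := by omega
  have hrn : r ≤ n := by omega
  have hCpos : (0:ℝ) < (n.choose k : ℝ) := by exact_mod_cast Nat.choose_pos hk
  have hsCpos : (0:ℝ) < Real.sqrt (n.choose k) := Real.sqrt_pos.2 hCpos
  have hgk : gF n r m k = aS m j / Real.sqrt (n.choose k) := by rw [gF, if_pos hkr]
  have hBnn : 0 ≤ B := Real.sqrt_nonneg _
  have hcnn : 0 ≤ c := by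
    apply Real.cos_nonneg_of_mem_Icc
    constructor
    · have h0 : (0:ℝ) ≤ Real.pi/(m+1) := by positivity
      linarith [Real.pi_pos]
    · rw [div_le_div_iff₀ (by positivity) (by norm_num)]
      have hm2 : (2:ℝ) ≤ (m:ℝ) := by exact_mod_cast hm
      apply mul_le_mul_of_nonneg_left (by linarith) Real.pi_pos.le
  have E1 : (k:ℝ) * gF n r m (k-1) * ((n.choose k : ℝ) * gF n r m k)
      ≥ B * (aS m (j-1) * aS m j) := by
    by_cases hj2 : r + 2 ≤ k + m
    case neg =>
      have hjeq : j = 1 := by omega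
      rw [hjeq]
      simp only [Nat.sub_self, aS_zero, zero_mul, mul_zero]
      rcases Nat.eq_zero_or_pos k with hk0 | hk1
      · rw [hk0]; simp
      · have : gF n r m (k-1) = 0 := by
          rw [gF, if_pos (by omega), show k - 1 + m - r = 0 by omega, aS_zero]
          simp
        rw [this]; simp
    case pos =>
      have hk1 : 1 ≤ k := by omega
      have hg1 : gF n r m (k-1) = aS m (j-1) / Real.sqrt (n.choose (k-1)) := by
        rw [gF, if_pos (by omega), show k - 1 + m - r = j - 1 by omega]
      have hsC1pos : (0:ℝ) < Real.sqrt (n.choose (k-1)) :=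
        Real.sqrt_pos.2 (by exact_mod_cast Nat.choose_pos (by omega : k - 1 ≤ n))
      have key : (k:ℝ) * gF n r m (k-1) * ((n.choose k : ℝ) * gF n r m k)
          = aS m (j-1) * aS m j * Real.sqrt ((k*(n+1-k):ℕ)) := by
        rw [hg1, hgk]
        rw [show (k:ℝ) * (aS m (j-1) / Real.sqrt (n.choose (k-1)))
              * ((n.choose k : ℝ) * (aS m j / Real.sqrt (n.choose k)))
            = aS m (j-1) * aS m j * (((k:ℝ) * (n.choose k))
                / (Real.sqrt (n.choose k) * Real.sqrt (n.choose (k-1)))) by ring]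
        rw [sqrt_choose_left n k hk1 hk,
          mul_div_cancel_right₀ _ (mul_pos hsCpos hsC1pos).ne']
      rw [key]
      have hnn : 0 ≤ aS m (j-1) * aS m j :=
        mul_nonneg (aS_nonneg m (by omega)) (aS_nonneg m (by omega))
      have hle : B ≤ Real.sqrt ((k*(n+1-k):ℕ)) := by
        apply Real.sqrt_le_sqrt
        exact_mod_cast Nat.mul_le_mul (by omega) (by omega)
      calc B * (aS m (j-1) * aS m j) = aS m (j-1) * aS m j * B := by ring
        _ ≤ aS m (j-1) * aS m j * Real.sqrt ((k*(n+1-k):ℕ)) :=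
            mul_le_mul_of_nonneg_left hle hnn
  have E2 : ((n:ℝ) - k) * gF n r m (k+1) * ((n.choose k : ℝ) * gF n r m k)
      ≥ B * (aS m (j+1) * aS m j) := by
    by_cases hkr2 : k = r
    case pos =>
      have hjm : j = m := by omega
      have : gF n r m (k+1) = 0 := by rw [gF, if_neg (by omega)]
      rw [this, hjm, aS_top]
      simp
    case neg =>
      have hkr1 : k + 1 ≤ r := by omega
      have hkn : k < n := by omega
      have hg1 : gF n r m (k+1) = aS m (j+1) / Real.sqrt (n.choose (k+1)) := by
        rw [gF, if_pos hkr1, show k + 1 + m - r = j + 1 by omega]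
      have hcast : ((n:ℝ) - k) = ((n-k:ℕ):ℝ) := by
        rw [Nat.cast_sub hk]
      have hsC2pos : (0:ℝ) < Real.sqrt (n.choose (k+1)) :=
        Real.sqrt_pos.2 (by exact_mod_cast Nat.choose_pos (by omega : k + 1 ≤ n))
      have key : ((n:ℝ) - k) * gF n r m (k+1) * ((n.choose k : ℝ) * gF n r m k)
          = aS m (j+1) * aS m j * Real.sqrt (((k+1)*(n-k):ℕ)) := by
        rw [hg1, hgk, hcast]
        rw [show ((n-k:ℕ):ℝ) * (aS m (j+1) / Real.sqrt (n.choose (k+1)))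
              * ((n.choose k : ℝ) * (aS m j / Real.sqrt (n.choose k)))
            = aS m (j+1) * aS m j * ((((n-k:ℕ):ℝ) * (n.choose k))
                / (Real.sqrt (n.choose k) * Real.sqrt (n.choose (k+1)))) by ring]
        rw [sqrt_choose_right n k hkn,
          mul_div_cancel_right₀ _ (mul_pos hsCpos hsC2pos).ne']
      rw [key]
      have hnn : 0 ≤ aS m (j+1) * aS m j :=
        mul_nonneg (aS_nonneg m (by omega)) (aS_nonneg m (by omega))
      have hle : B ≤ Real.sqrt (((k+1)*(n-k):ℕ)) := by
        apply Real.sqrt_le_sqrt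
        exact_mod_cast Nat.mul_le_mul (by omega) (by omega)
      calc B * (aS m (j+1) * aS m j) = aS m (j+1) * aS m j * B := by ring
        _ ≤ aS m (j+1) * aS m j * Real.sqrt (((k+1)*(n-k):ℕ)) :=
            mul_le_mul_of_nonneg_left hle hnn
  have E3 : (n.choose k : ℝ) * gF n r m k ^ 2 = aS m j ^ 2 := by
    rw [hgk, div_pow, Real.sq_sqrt hCpos.le]
    field_simp
  have E4 : aS m (j-1) + aS m (j+1) = 2 * c * aS m j := aS_rec m hjge
  have expand : ((k : ℝ) * gF n r m (k-1) + ((n:ℝ) - k) * gF n r m (k+1)) * gF n r m k * (n.choose k : ℝ)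
      = (k:ℝ) * gF n r m (k-1) * ((n.choose k : ℝ) * gF n r m k)
        + ((n:ℝ) - k) * gF n r m (k+1) * ((n.choose k : ℝ) * gF n r m k) := by ring
  rw [expand, E3]
  have hfin : B * (aS m (j-1) * aS m j) + B * (aS m (j+1) * aS m j)
      = 2 * B * c * aS m j ^ 2 := by
    have h5 : B * (aS m (j-1) * aS m j) + B * (aS m (j+1) * aS m j)
        = B * aS m j * (aS m (j-1) + aS m (j+1)) := by ring
    rw [h5, E4]; ring
  linarith [E1, E2]

/-! ### Summation -/

lemma sum_ge (n r m : ℕ) (hm : 2 ≤ m) (hmr : m ≤ r+1) (h2r : 2*r ≤ n) :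
    ∑ x : Fin n → Bool, adjOp (fun y => gF n r m (hWt y)) x * (gF n r m (hWt x))
      ≥ 2 * Real.sqrt (((r+2-m)*(n-r):ℕ)) * Real.cos (Real.pi/(m+1))
        * ∑ x : Fin n → Bool, gF n r m (hWt x) * gF n r m (hWt x) := by
  set B := Real.sqrt (((r+2-m)*(n-r):ℕ))
  set c := Real.cos (Real.pi/(m+1))
  have step1 : ∑ x : Fin n → Bool, adjOp (fun y => gF n r m (hWt y)) x * (gF n r m (hWt x))
      = ∑ x : Fin n → Bool,
          (fun k : ℕ => ((k : ℝ) * gF n r m (k-1) + ((n:ℝ) - k) * gF n r m (k+1)) * gF n r m k) (hWt x) := by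
    refine Finset.sum_congr rfl fun x _ => ?_
    rw [adj_radial]
  have step2 : ∑ x : Fin n → Bool, gF n r m (hWt x) * gF n r m (hWt x)
      = ∑ x : Fin n → Bool, (fun k : ℕ => gF n r m k * gF n r m k) (hWt x) := rfl
  have e1 := sum_by_weight (n := n)
    (fun k : ℕ => ((k : ℝ) * gF n r m (k-1) + ((n:ℝ) - k) * gF n r m (k+1)) * gF n r m k)
  have e2 := sum_by_weight (n := n) (fun k : ℕ => gF n r m k * gF n r m k)
  rw [step1, step2, e1, e2, Finset.mul_sum]
  apply Finset.sum_le_sum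
  intro k hk
  have hkn : k ≤ n := Nat.lt_succ_iff.1 (Finset.mem_range.1 hk)
  calc 2 * B * c * ((n.choose k : ℝ) * (gF n r m k * gF n r m k))
      = 2 * B * c * ((n.choose k : ℝ) * gF n r m k ^ 2) := by ring
    _ ≤ ((k : ℝ) * gF n r m (k-1) + ((n:ℝ) - k) * gF n r m (k+1)) * gF n r m k * (n.choose k : ℝ) :=
        term_ge n r m k hm hmr h2r hkn
    _ = (n.choose k : ℝ) * (((k : ℝ) * gF n r m (k-1) + ((n:ℝ) - k) * gF n r m (k+1)) * gF n r m k) := by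
        ring

/-! ### Analytic estimates -/

lemma sqrt_add_le' (a b : ℝ) (ha : 0 ≤ a) (hb : 0 ≤ b) :
    Real.sqrt (a + b) ≤ Real.sqrt a + Real.sqrt b := by
  rw [Real.sqrt_le_iff]
  constructor
  · positivity
  · nlinarith [Real.sq_sqrt ha, Real.sq_sqrt hb, Real.sqrt_nonneg a, Real.sqrt_nonneg b]

lemma analytic (ε : ℝ) (hε : 0 < ε) (m n r : ℕ) (hm : 2 ≤ m)
    (hmsq : 10 ≤ ε * (m:ℝ)^2) (hn : 16 * (m:ℝ) ≤ ε^2 * n)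
    (hmr : m ≤ r + 1) (h2r : 2*r ≤ n) :
    2 * Real.sqrt (((r+2-m)*(n-r) : ℕ)) * Real.cos (Real.pi/(m+1))
      ≥ 2 * Real.sqrt ((r:ℝ) * ((n:ℝ) - r)) - ε * n := by
  have hrn : r ≤ n := by omega
  have hncast : ((n-r:ℕ):ℝ) = (n:ℝ) - r := by rw [Nat.cast_sub hrn]
  set c := Real.cos (Real.pi/(m+1)) with hcdef
  set S1 := Real.sqrt ((r:ℝ) * ((n:ℝ) - r)) with hS1
  set S2 := Real.sqrt (((r+2-m)*(n-r) : ℕ)) with hS2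
  have hS1nn : 0 ≤ S1 := Real.sqrt_nonneg _
  have hS2nn : 0 ≤ S2 := Real.sqrt_nonneg _
  have hc1 : c ≤ 1 := Real.cos_le_one _
  have hmpos : (0:ℝ) < (m:ℝ) := by exact_mod_cast Nat.lt_of_lt_of_le Nat.zero_lt_two hm
  have hnnn : (0:ℝ) ≤ (n:ℝ) := Nat.cast_nonneg n
  have hcos : 1 - c ≤ ε / 2 := by
    have h1 := Real.one_sub_sq_div_two_le_cos (x := Real.pi/(m+1))
    have hpi : Real.pi ≤ 3.15 := le_of_lt Real.pi_lt_d2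
    have hθ : (Real.pi/(m+1))^2 ≤ ε := by
      rw [div_pow]
      rw [div_le_iff₀ (by positivity)]
      have h2 : ((m:ℝ)+1)^2 ≥ (m:ℝ)^2 := by nlinarith
      have h3 : Real.pi^2 ≤ 10 := by nlinarith [Real.pi_pos]
      nlinarith
    linarith
  have h2S1 : 2 * S1 ≤ n := by
    have : S1 ≤ (n:ℝ)/2 := by
      rw [hS1, show ((n:ℝ)/2) = Real.sqrt (((n:ℝ)/2)^2) from
        (Real.sqrt_sq (by positivity)).symm]
      apply Real.sqrt_le_sqrt
      have h2rR : 2*(r:ℝ) ≤ n := by exact_mod_cast h2r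
      nlinarith
    linarith
  have hS21 : S2 ≤ S1 := by
    rw [hS1, hS2, ← hncast]
    have : (((r+2-m)*(n-r) : ℕ):ℝ) ≤ ((r*(n-r) : ℕ):ℝ) := by
      exact_mod_cast Nat.mul_le_mul_right _ (by omega)
    refine (Real.sqrt_le_sqrt this).trans ?_
    apply le_of_eq
    congr 1
    push_cast
    ring
  have hdiff : S1 - S2 ≤ ε * n / 4 := by
    have hN : (r*(n-r) : ℕ) ≤ (r+2-m)*(n-r) + m*n := by
      have e1 : r*(n-r) ≤ ((r+2-m)+m)*(n-r) := Nat.mul_le_mul_right _ (by omega)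
      have e2 : ((r+2-m)+m)*(n-r) = (r+2-m)*(n-r) + m*(n-r) := Nat.add_mul _ _ _
      have e3 : m*(n-r) ≤ m*n := Nat.mul_le_mul_left _ (by omega)
      calc r*(n-r) ≤ ((r+2-m)+m)*(n-r) := e1
        _ = (r+2-m)*(n-r) + m*(n-r) := e2
        _ ≤ (r+2-m)*(n-r) + m*n := Nat.add_le_add_left e3 _
    have h1 : S1 ≤ S2 + Real.sqrt ((m:ℝ)*n) := by
      have hS1' : S1 = Real.sqrt ((r*(n-r):ℕ)) := by
        rw [hS1, ← hncast, ← Nat.cast_mul]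
      rw [hS1']
      calc Real.sqrt ((r*(n-r):ℕ)) ≤ Real.sqrt ((((r+2-m)*(n-r):ℕ):ℝ) + ((m:ℝ)*n)) := by
            apply Real.sqrt_le_sqrt
            have := (Nat.cast_le (α := ℝ)).2 hN
            push_cast at this ⊢
            linarith
        _ ≤ S2 + Real.sqrt ((m:ℝ)*n) := sqrt_add_le' _ _ (by positivity) (by positivity)
    have h2 : Real.sqrt ((m:ℝ)*n) ≤ ε * n / 4 := by
      rw [show (ε*n/4) = Real.sqrt ((ε*n/4)^2) from (Real.sqrt_sq (by positivity)).symm]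
      apply Real.sqrt_le_sqrt
      nlinarith
    linarith
  have hc0 : 0 ≤ c := by
    rw [hcdef]
    apply Real.cos_nonneg_of_mem_Icc
    constructor
    · have h0 : (0:ℝ) ≤ Real.pi/(m+1) := by positivity
      linarith [Real.pi_pos]
    · rw [div_le_div_iff₀ (by positivity) (by norm_num)]
      have hm2 : (2:ℝ) ≤ (m:ℝ) := by exact_mod_cast hm
      apply mul_le_mul_of_nonneg_left (by linarith) Real.pi_pos.le
  have A1 : 2*c*(S1-S2) ≤ 2*(S1-S2) := by
    have h := mul_nonneg (sub_nonneg.2 hc1) (sub_nonneg.2 hS21)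
    linarith only [h]
  have A2 : (1-c)*(2*S1) ≤ (ε/2)*(n:ℝ) :=
    mul_le_mul hcos h2S1 (by linarith) (by linarith)
  linarith only [A1, A2, hdiff]

/-- For every `ε > 0` and all sufficiently large `n`, for every `1 ≤ r ≤ n/2` there is a
nonzero `f` supported on the Hamming ball of radius `r` around `0` with Rayleigh
quotient at least `2√(r(n − r)) − εn`, i.e. `λ_{B_r} ≥ 2√(r(n−r)) − εn`. -/
theorem ball_eigenvalue_lower_bound (ε : ℝ) (hε : 0 < ε) :
    ∃ N : ℕ, ∀ n : ℕ, N ≤ n → ∀ r : ℕ, 1 ≤ r → 2 * r ≤ n →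
      ∃ f : (Fin n → Bool) → ℝ, f ≠ 0 ∧ (∀ x, f x ≠ 0 → hWt x ≤ r) ∧
        cubeInner (adjOp f) f ≥
          (2 * Real.sqrt ((r : ℝ) * ((n : ℝ) - r)) - ε * n) * cubeInner f f := by
  set m : ℕ := max 2 ⌈Real.sqrt (10/ε)⌉₊ with hmdef
  have hm2 : 2 ≤ m := le_max_left _ _
  have hmsq : 10 ≤ ε * (m:ℝ)^2 := by
    have h1 : Real.sqrt (10/ε) ≤ (m:ℝ) := by
      refine (Nat.le_ceil _).trans ?_
      exact_mod_cast Nat.cast_le.2 (le_max_right 2 _)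
    have h2 : 10/ε ≤ (m:ℝ)^2 := by
      nlinarith [Real.sq_sqrt (show (0:ℝ) ≤ 10/ε by positivity), Real.sqrt_nonneg (10/ε)]
    rw [div_le_iff₀ hε] at h2
    linarith
  refine ⟨⌈16*(m:ℝ)/ε^2⌉₊ + 1, ?_⟩
  intro n hn r hr1 h2r
  have hnε : 16 * (m:ℝ) ≤ ε^2 * n := by
    have h1 : (16*(m:ℝ)/ε^2) ≤ n := by
      refine (Nat.le_ceil _).trans ?_
      exact_mod_cast Nat.le_of_succ_le hn
    rw [div_le_iff₀ (by positivity)] at h1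
    linarith
  have hrn : r ≤ n := by omega
  have h2npos : (0:ℝ) < 2^n := by positivity
  by_cases hcase : m ≤ r + 1
  · -- main construction
    set f : (Fin n → Bool) → ℝ := fun x => gF n r m (hWt x) with hfdef
    have hsupp : ∀ x, f x ≠ 0 → hWt x ≤ r := by
      intro x hx
      by_contra hgt
      exact hx (if_neg (by omega))
    have hfne : f ≠ 0 := by
      have hpos : 0 < (Finset.univ.filter fun x : Fin n → Bool => hWt x = r).card := by
        rw [card_weight_eq]
        exact Nat.choose_pos hrn
      obtain ⟨x0, hx0⟩ := Finset.card_pos.1 hpos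
      have hx0r : hWt x0 = r := (Finset.mem_filter.1 hx0).2
      have hfx0 : f x0 = aS m m / Real.sqrt (n.choose r) := by
        rw [hfdef]
        simp only
        rw [hx0r, gF, if_pos le_rfl, show r + m - r = m by omega]
      have hne : f x0 ≠ 0 := by
        rw [hfx0]
        apply div_ne_zero
        · exact (aS_pos m (by omega) le_rfl).ne'
        · exact (Real.sqrt_pos.2 (by exact_mod_cast Nat.choose_pos hrn)).ne'
      intro h
      exact hne (by rw [h]; rfl)
    refine ⟨f, hfne, hsupp, ?_⟩
    have hsum := sum_ge n r m hm2 hcase h2r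
    have hden : (0:ℝ) ≤ ∑ x : Fin n → Bool, f x * f x :=
      Finset.sum_nonneg fun x _ => mul_self_nonneg _
    have hana := analytic ε hε m n r hm2 hmsq hnε hcase h2r
    set K := 2 * Real.sqrt ((r : ℝ) * ((n : ℝ) - r)) - ε * n with hK
    have hnum : K * ∑ x : Fin n → Bool, f x * f x
        ≤ ∑ x : Fin n → Bool, adjOp f x * f x := by
      calc K * ∑ x : Fin n → Bool, f x * f x
          ≤ (2 * Real.sqrt (((r+2-m)*(n-r):ℕ)) * Real.cos (Real.pi/(m+1)))
              * ∑ x : Fin n → Bool, f x * f x := mul_le_mul_of_nonneg_right hana hden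
        _ ≤ ∑ x : Fin n → Bool, adjOp f x * f x := hsum
    rw [ge_iff_le, cubeInner, cubeInner, ← mul_div_assoc]
    gcongr
  · -- small r : use delta function at 0
    set x0 : Fin n → Bool := fun _ => false with hx0def
    set f : (Fin n → Bool) → ℝ := fun x => if x = x0 then 1 else 0 with hfdef
    have hfx0 : f x0 = 1 := by rw [hfdef]; simp
    have hfne : f ≠ 0 := by
      intro h
      have := congrFun h x0
      rw [hfx0] at this
      simp at this
    have hsupp : ∀ x, f x ≠ 0 → hWt x ≤ r := by
      intro x hx
      have : x = x0 := by
        by_contra hne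
        exact hx (if_neg hne)
      rw [this]
      have : hWt x0 = 0 := by
        rw [hx0def]
        simp [hWt]
      omega
    refine ⟨f, hfne, hsupp, ?_⟩
    have hnum : ∑ x : Fin n → Bool, adjOp f x * f x = adjOp f x0 := by
      rw [Finset.sum_eq_single x0]
      · rw [hfx0, mul_one]
      · intro b _ hb
        have : f b = 0 := if_neg hb
        rw [this, mul_zero]
      · intro h
        exact absurd (Finset.mem_univ x0) h
    have hadj0 : adjOp f x0 = 0 := by
      rw [adjOp]
      apply Finset.sum_eq_zero
      intro y hy
      have hd : hammingDist x0 y = 1 := (Finset.mem_filter.1 hy).2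
      have : y ≠ x0 := by
        intro h
        rw [h, hammingDist_self] at hd
        exact one_ne_zero hd.symm
      exact if_neg this
    have hden : (0:ℝ) ≤ ∑ x : Fin n → Bool, f x * f x :=
      Finset.sum_nonneg fun x _ => mul_self_nonneg _
    have hKneg : 2 * Real.sqrt ((r : ℝ) * ((n : ℝ) - r)) - ε * n ≤ 0 := by
      have h1 : Real.sqrt ((r:ℝ) * ((n:ℝ) - r)) ≤ Real.sqrt ((m:ℝ)*n) := by
        apply Real.sqrt_le_sqrt
        have hrm : (r:ℝ) ≤ m := by exact_mod_cast (by omega : r ≤ m)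
        have hnr : (n:ℝ) - r ≤ n := by
          have : (0:ℝ) ≤ r := Nat.cast_nonneg r
          linarith
        have hnr0 : (0:ℝ) ≤ (n:ℝ) - r := by
          have : (r:ℝ) ≤ n := by exact_mod_cast hrn
          linarith
        nlinarith [Nat.cast_nonneg (α := ℝ) n]
      have h2 : Real.sqrt ((m:ℝ)*n) ≤ ε * n / 4 := by
        rw [show (ε*n/4) = Real.sqrt ((ε*n/4)^2) from (Real.sqrt_sq (by positivity)).symm]
        apply Real.sqrt_le_sqrt
        have hnnn : (0:ℝ) ≤ n := Nat.cast_nonneg n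
        nlinarith
      have hnnn : (0:ℝ) ≤ n := Nat.cast_nonneg n
      nlinarith [hε]
    rw [ge_iff_le, cubeInner, cubeInner, hnum, hadj0]
    have hrhs : (2 * Real.sqrt ((r : ℝ) * ((n : ℝ) - r)) - ε * n)
        * ((∑ x : Fin n → Bool, f x * f x) / 2^n) ≤ 0 :=
      mul_nonpos_of_nonpos_of_nonneg hKneg (by positivity)
    simpa using hrhs
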